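/- arXiv:2306.02358 — 6 statements merged into one kernel-verified Lean document; each statement's English description precedes it below -/
import Mathlib

section
/- For the function f(w, e) = (|L(w) ∩ e| · |R(w) ∩ e|) / (|L(w) ∪ (e \ R(w))| · |R(w) ∪ (e \ L(w))|), if L(w) ∪ R(w) = e then f(w, e) = 1, and conversely if f(w, e) = 1 then L(w) ∪ R(w) ⊆ e. -/
/-- Penalized interaction function. -/
noncomputable def fpen (L R e : Finset ℕ) : ℝ :=
  (((L ∩ e).card : ℝ) * (R ∩ e).card) /
    (((L ∪ (e \ R)).card : ℝ) * (R ∪ (e \ L)).card)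

/-- If L ∪ R = e then f(w, e) = 1, and conversely f(w, e) = 1 implies L ∪ R ⊆ e. -/
theorem fpen_perfect (L R e : Finset ℕ)
    (hL : L.Nonempty) (hR : R.Nonempty) (hLR : Disjoint L R) :
    (L ∪ R = e → fpen L R e = 1) ∧ (fpen L R e = 1 → L ∪ R ⊆ e) := by
  have hLc : 0 < L.card := Finset.card_pos.mpr hL
  have hRc : 0 < R.card := Finset.card_pos.mpr hR
  constructor
  · intro h
    subst h
    have hLe : L ∩ (L ∪ R) = L := by simp
    have hRe : R ∩ (L ∪ R) = R := by simp
    have h1 : L ∪ ((L ∪ R) \ R) = L := by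
      rw [Finset.union_sdiff_right, hLR.sdiff_eq_left, Finset.union_self]
    have h2 : R ∪ ((L ∪ R) \ L) = R := by
      rw [Finset.union_sdiff_left, hLR.symm.sdiff_eq_left, Finset.union_self]
    rw [fpen, hLe, hRe, h1, h2]
    apply div_self
    positivity
  · intro h
    have hsub1 : L ∩ e ⊆ L ∪ (e \ R) := (Finset.inter_subset_left).trans Finset.subset_union_left
    have hsub2 : R ∩ e ⊆ R ∪ (e \ L) := (Finset.inter_subset_left).trans Finset.subset_union_left
    have hc1 : (L ∩ e).card ≤ (L ∪ (e \ R)).card := Finset.card_le_card hsub1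
    have hc2 : (R ∩ e).card ≤ (R ∪ (e \ L)).card := Finset.card_le_card hsub2
    have hd1 : 0 < (L ∪ (e \ R)).card :=
      Finset.card_pos.mpr (hL.mono Finset.subset_union_left)
    have hd2 : 0 < (R ∪ (e \ L)).card :=
      Finset.card_pos.mpr (hR.mono Finset.subset_union_left)
    have hden : (((L ∪ (e \ R)).card : ℝ) * (R ∪ (e \ L)).card) ≠ 0 := by positivity
    have heq : ((L ∩ e).card : ℝ) * (R ∩ e).card =
        ((L ∪ (e \ R)).card : ℝ) * (R ∪ (e \ L)).card := by
      have := h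
      rw [fpen, div_eq_one_iff_eq hden] at this
      exact this
    have heqn : (L ∩ e).card * (R ∩ e).card =
        (L ∪ (e \ R)).card * (R ∪ (e \ L)).card := by exact_mod_cast heq
    have h1 : (L ∩ e).card = (L ∪ (e \ R)).card := by nlinarith
    have h2 : (R ∩ e).card = (R ∪ (e \ L)).card := by nlinarith
    have hs1 : L ∩ e = L ∪ (e \ R) := Finset.eq_of_subset_of_card_le hsub1 (le_of_eq h1.symm)
    have hs2 : R ∩ e = R ∪ (e \ L) := Finset.eq_of_subset_of_card_le hsub2 (le_of_eq h2.symm)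
    apply Finset.union_subset
    · intro x hx
      have : x ∈ L ∩ e := hs1 ▸ Finset.mem_union_left _ hx
      exact (Finset.mem_inter.mp this).2
    · intro x hx
      have : x ∈ R ∩ e := hs2 ▸ Finset.mem_union_left _ hx
      exact (Finset.mem_inter.mp this).2
end

section
/- For f(w, e) = (|L(w) ∩ e| · |R(w) ∩ e|) / (|L(w) ∪ (e \ R(w))| · |R(w) ∪ (e \ L(w))|), if e ⊆ e' ⊆ e ∪ L(w) ∪ R(w) then f(w, e) ≤ f(w, e'). -/
/-- Enlarging a candidate hyperedge with wing-nodes never decreases fpen. -/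
theorem fpen_mono (L R e e' : Finset ℕ)
    (hL : L.Nonempty) (hR : R.Nonempty) (hLR : Disjoint L R)
    (h1 : e ⊆ e') (h2 : e' ⊆ e ∪ L ∪ R) :
    fpen L R e ≤ fpen L R e' := by
  have keyL : ∀ s : Finset ℕ, (L ∪ (s \ R)).card = L.card + (s \ (L ∪ R)).card := by
    intro s
    have hs : L ∪ (s \ R) = L ∪ (s \ (L ∪ R)) := by
      ext x; simp only [Finset.mem_union, Finset.mem_sdiff]; tauto
    rw [hs, Finset.card_union_of_disjoint]
    rw [Finset.disjoint_left]
    intro x hx hx'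
    exact (Finset.mem_sdiff.1 hx').2 (Finset.mem_union.2 (Or.inl hx))
  have keyR : ∀ s : Finset ℕ, (R ∪ (s \ L)).card = R.card + (s \ (L ∪ R)).card := by
    intro s
    have hs : R ∪ (s \ L) = R ∪ (s \ (L ∪ R)) := by
      ext x; simp only [Finset.mem_union, Finset.mem_sdiff]; tauto
    rw [hs, Finset.card_union_of_disjoint]
    rw [Finset.disjoint_left]
    intro x hx hx'
    exact (Finset.mem_sdiff.1 hx').2 (Finset.mem_union.2 (Or.inr hx))
  have hsd : e' \ (L ∪ R) = e \ (L ∪ R) := by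
    apply Finset.Subset.antisymm
    · intro x hx
      rw [Finset.mem_sdiff] at hx ⊢
      refine ⟨?_, hx.2⟩
      rcases Finset.mem_union.1 (h2 hx.1) with h | h
      · rcases Finset.mem_union.1 h with h | h
        · exact h
        · exact absurd (Finset.mem_union.2 (Or.inl h)) hx.2
      · exact absurd (Finset.mem_union.2 (Or.inr h)) hx.2
    · intro x hx
      rw [Finset.mem_sdiff] at hx ⊢
      exact ⟨h1 hx.1, hx.2⟩
  unfold fpen
  rw [keyL e, keyL e', keyR e, keyR e', hsd]
  set c := (e \ (L ∪ R)).card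
  have hLpos : 0 < L.card := Finset.card_pos.2 hL
  have hRpos : 0 < R.card := Finset.card_pos.2 hR
  have hden : (0:ℝ) < ((L.card + c : ℕ) : ℝ) * ((R.card + c : ℕ) : ℝ) := by
    have : 0 < L.card + c := Nat.lt_of_lt_of_le hLpos (Nat.le_add_right _ _)
    have h2' : 0 < R.card + c := Nat.lt_of_lt_of_le hRpos (Nat.le_add_right _ _)
    positivity
  have hnum : ((L ∩ e).card : ℝ) * ((R ∩ e).card : ℝ) ≤
      ((L ∩ e').card : ℝ) * ((R ∩ e').card : ℝ) := by
    have ha := Finset.card_le_card (Finset.inter_subset_inter Finset.Subset.rfl h1 : L ∩ e ⊆ L ∩ e')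
    have hb := Finset.card_le_card (Finset.inter_subset_inter Finset.Subset.rfl h1 : R ∩ e ⊆ R ∩ e')
    have ha' : ((L ∩ e).card : ℝ) ≤ (L ∩ e').card := Nat.cast_le.2 ha
    have hb' : ((R ∩ e).card : ℝ) ≤ (R ∩ e').card := Nat.cast_le.2 hb
    exact mul_le_mul ha' hb' (by positivity) (by positivity)
  gcongr
end

section
/- For f(w, e) = (|L(w) ∩ e| · |R(w) ∩ e|) / (|L(w) ∪ (e \ R(w))| · |R(w) ∪ (e \ L(w))|), if e ⊊ e' ⊆ e ∪ L(w) ∪ R(w) and e' intersects both L(w) and R(w), then f(w, e) < f(w, e'). -/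
lemma card_union_sdiff (L R s : Finset ℕ) :
    (L ∪ (s \ R)).card = L.card + (s \ (R ∪ L)).card := by
  have h : L ∪ (s \ R) = L ∪ ((s \ R) \ L) := by
    rw [Finset.union_sdiff_self_eq_union]
  rw [h, Finset.card_union_of_disjoint Finset.disjoint_sdiff, sdiff_sdiff, Finset.sup_eq_union]

/-- Strictly enlarging a candidate hyperedge with wing-nodes so that it overlaps
both wings strictly increases fpen. -/
theorem fpen_strict_mono (L R e e' : Finset ℕ)
    (hL : L.Nonempty) (hR : R.Nonempty) (hLR : Disjoint L R)
    (h1 : e ⊂ e') (h2 : e' ⊆ e ∪ L ∪ R)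
    (hov : (e' ∩ L).Nonempty ∧ (e' ∩ R).Nonempty) :
    fpen L R e < fpen L R e' := by
  obtain ⟨hovL, hovR⟩ := hov
  have hsub : e ⊆ e' := h1.subset
  -- tails coincide
  have hE : e' \ (L ∪ R) = e \ (L ∪ R) := by
    apply Finset.Subset.antisymm
    · intro x hx
      simp only [Finset.mem_sdiff, Finset.mem_union] at hx ⊢
      have := h2 hx.1
      simp only [Finset.mem_union] at this
      rcases this with (h | h) | h
      · exact ⟨h, hx.2⟩
      · exact absurd (Or.inl h) hx.2
      · exact absurd (Or.inr h) hx.2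
    · exact Finset.sdiff_subset_sdiff hsub (le_refl _)
  have hE' : e' \ (R ∪ L) = e \ (R ∪ L) := by
    rw [Finset.union_comm R L]; exact hE
  -- denominators equal
  have hd1 : (L ∪ (e' \ R)).card = (L ∪ (e \ R)).card := by
    rw [card_union_sdiff, card_union_sdiff, hE']
  have hd2 : (R ∪ (e' \ L)).card = (R ∪ (e \ L)).card := by
    rw [card_union_sdiff, card_union_sdiff, Finset.union_comm L R, hE']
  -- denominator positive
  have hLpos : 0 < (L ∪ (e \ R)).card :=
    Finset.card_pos.mpr (Finset.Nonempty.mono Finset.subset_union_left hL)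
  have hRpos : 0 < (R ∪ (e \ L)).card :=
    Finset.card_pos.mpr (Finset.Nonempty.mono Finset.subset_union_left hR)
  -- numerator monotone
  have haL : L ∩ e ⊆ L ∩ e' := Finset.inter_subset_inter (le_refl _) hsub
  have haR : R ∩ e ⊆ R ∩ e' := Finset.inter_subset_inter (le_refl _) hsub
  have haL1 : 0 < (L ∩ e').card := by
    rw [Finset.inter_comm]; exact Finset.card_pos.mpr hovL
  have haR1 : 0 < (R ∩ e').card := by
    rw [Finset.inter_comm]; exact Finset.card_pos.mpr hovR
  -- strictness: one of the intersections strictly grows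
  have hstrict : (L ∩ e).card < (L ∩ e').card ∨ (R ∩ e).card < (R ∩ e').card := by
    by_contra hcon
    push_neg at hcon
    have heqL : L ∩ e = L ∩ e' :=
      Finset.eq_of_subset_of_card_le haL hcon.1
    have heqR : R ∩ e = R ∩ e' :=
      Finset.eq_of_subset_of_card_le haR hcon.2
    have : e' ⊆ e := by
      intro x hx
      by_cases hxL : x ∈ L
      · have : x ∈ L ∩ e := heqL ▸ Finset.mem_inter.mpr ⟨hxL, hx⟩
        exact (Finset.mem_inter.mp this).2
      by_cases hxR : x ∈ R
      · have : x ∈ R ∩ e := heqR ▸ Finset.mem_inter.mpr ⟨hxR, hx⟩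
        exact (Finset.mem_inter.mp this).2
      · have : x ∈ e' \ (L ∪ R) := by
          simp [hx, hxL, hxR]
        rw [hE] at this
        exact (Finset.mem_sdiff.mp this).1
    exact (h1.not_subset) this
  have hnum : (L ∩ e).card * (R ∩ e).card < (L ∩ e').card * (R ∩ e').card := by
    have h1' : (L ∩ e).card ≤ (L ∩ e').card := Finset.card_le_card haL
    have h2' : (R ∩ e).card ≤ (R ∩ e').card := Finset.card_le_card haR
    rcases hstrict with h | h
    · calc (L ∩ e).card * (R ∩ e).card ≤ (L ∩ e).card * (R ∩ e').card :=
            Nat.mul_le_mul_left _ h2'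
        _ < (L ∩ e').card * (R ∩ e').card := Nat.mul_lt_mul_of_lt_of_le h (le_refl _) haR1
    · calc (L ∩ e).card * (R ∩ e).card ≤ (L ∩ e').card * (R ∩ e).card :=
            Nat.mul_le_mul_right _ h1'
        _ < (L ∩ e').card * (R ∩ e').card := Nat.mul_lt_mul_of_le_of_lt (le_refl _) h haL1
  unfold fpen
  rw [hd1, hd2]
  have hDpos : (0:ℝ) < ((L ∪ (e \ R)).card : ℝ) * (R ∪ (e \ L)).card := by
    positivity
  rw [div_lt_div_iff_of_pos_right hDpos]
  exact_mod_cast hnum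
end

section
/- Under a bijection g: C → C' with e ⊆ g(e) ⊆ e ∪ L(w) ∪ R(w) for every e ∈ C, HyperTrans satisfies T(w, C; f) ≤ T(w, C'; f), provided f(w, e) ≤ f(w, e') whenever e ⊆ e' ⊆ e ∪ L(w) ∪ R(w). -/
/-- Max over candidate hyperedges, with the empty max equal to 0. -/
noncomputable def hmax (C : Finset (Finset ℕ)) (g : Finset ℕ → ℝ) : ℝ := C.fold max 0 g

/-- HyperTrans of the hyperwedge with wings L, R w.r.t. candidate set C and
interaction function f. -/
noncomputable def HT (L R : Finset ℕ) (C : Finset (Finset ℕ)) (f : Finset ℕ → ℝ) : ℝ :=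
  (∑ v1 ∈ L, ∑ v2 ∈ R, hmax C (fun e => if v1 ∈ e ∧ v2 ∈ e then f e else 0)) /
    ((L.card : ℝ) * R.card)

lemma hmax_le_hmax (C C' : Finset (Finset ℕ)) (h h' : Finset ℕ → ℝ)
    (H : ∀ e ∈ C, ∃ e' ∈ C', h e ≤ h' e') : hmax C h ≤ hmax C' h' := by
  unfold hmax
  rw [Finset.fold_max_le]
  refine ⟨(Finset.le_fold_max _).mpr (Or.inl le_rfl), fun e he => ?_⟩
  obtain ⟨e', he', hle⟩ := H e he
  exact le_trans hle ((Finset.le_fold_max _).mpr (Or.inr ⟨e', he', le_rfl⟩))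

/-- Under a bijection of candidate sets that enlarges each hyperedge with
wing-nodes, HyperTrans does not decrease, provided f is monotone under such
enlargements and nonnegative. -/
theorem HT_mono_under_bijection (L R : Finset ℕ) (C C' : Finset (Finset ℕ))
    (f : Finset ℕ → ℝ) (g : Finset ℕ → Finset ℕ)
    (hL : L.Nonempty) (hR : R.Nonempty) (hLR : Disjoint L R)
    (hf : ∀ e, 0 ≤ f e)
    (hg : Set.BijOn g (C : Set (Finset ℕ)) (C' : Set (Finset ℕ)))
    (henl : ∀ e ∈ C, e ⊆ g e ∧ g e ⊆ e ∪ L ∪ R)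
    (hfmono : ∀ e e', e ⊆ e' → e' ⊆ e ∪ L ∪ R → f e ≤ f e') :
    HT L R C f ≤ HT L R C' f := by
  unfold HT
  have hd : (0:ℝ) < (L.card : ℝ) * R.card := by
    have := Finset.card_pos.mpr hL
    have := Finset.card_pos.mpr hR
    positivity
  apply div_le_div_of_nonneg_right ?_ hd.le
  refine Finset.sum_le_sum fun v1 hv1 => Finset.sum_le_sum fun v2 hv2 => ?_
  apply hmax_le_hmax
  intro e he
  refine ⟨g e, hg.mapsTo he, ?_⟩
  obtain ⟨hsub, hsup⟩ := henl e he
  by_cases hmem : v1 ∈ e ∧ v2 ∈ e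
  · have hmem' : v1 ∈ g e ∧ v2 ∈ g e := ⟨hsub hmem.1, hsub hmem.2⟩
    rw [if_pos hmem, if_pos hmem']
    exact hfmono e (g e) hsub hsup
  · simp only [if_neg hmem]
    split
    · exact hf _
    · exact le_rfl
end

section
/- When every hyperedge of a hypergraph G has exactly 2 nodes, the HyperTrans hypergraph transitivity T(G) = (1/|W|) Σ_{w ∈ W} T(w, E; f) with f(w,e) = (|L(w) ∩ e|·|R(w) ∩ e|) / (|L(w) ∪ (e \ R(w))|·|R(w) ∪ (e \ L(w))|) equals the fraction of wedges of G (as a graph) that are closed by an edge, i.e., the graph transitivity 3·(number of triangles)/(number of wedges). -/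
/-- Hyperwedge transitivity of an unordered pair of hyperedges `w`
(a 2-element set of hyperedges), with the penalized `fpen`, written
symmetrically over the two orderings. -/
noncomputable def Tw (E : Finset (Finset ℕ)) (w : Finset (Finset ℕ)) : ℝ :=
  (∑ a ∈ w, ∑ b ∈ w \ {a}, HT (a \ b) (b \ a) E (fpen (a \ b) (b \ a))) / 2

/-- The set of hyperwedges of the hypergraph with hyperedge set E. -/
noncomputable def hyperwedges (E : Finset (Finset ℕ)) : Finset (Finset (Finset ℕ)) :=
  (E.powersetCard 2).filter
    (fun w => ∀ a ∈ w, ∀ b ∈ w, a ≠ b → ((a ∩ b).Nonempty ∧ ¬ a ⊆ b ∧ ¬ b ⊆ a))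

lemma fpen_pair (u v : ℕ) (huv : u ≠ v) : fpen {u} {v} {u,v} = 1 := by
  have h1 : ({u} : Finset ℕ) ∩ {u,v} = {u} := by ext x; simp; tauto
  have h2 : ({v} : Finset ℕ) ∩ {u,v} = {v} := by ext x; simp
  have h3 : ({u,v} : Finset ℕ) \ {v} = {u} := by
    ext x; simp; constructor
    · rintro ⟨h | h, h2⟩; exact h; exact absurd h h2
    · rintro rfl; exact ⟨Or.inl rfl, huv⟩
  have h4 : ({u,v} : Finset ℕ) \ {u} = {v} := by
    ext x; simp; constructor
    · rintro ⟨h | h, h2⟩; exact absurd h h2; exact h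
    · rintro rfl; exact ⟨Or.inr rfl, fun h => huv h.symm⟩
  simp [fpen, h1, h2, h3, h4]

lemma fold_max_indicator (c : Finset ℕ) (E : Finset (Finset ℕ)) (g : Finset ℕ → ℝ)
    (hg : ∀ e ∈ E, g e = if e = c then 1 else 0) :
    E.fold max 0 g = if c ∈ E then 1 else 0 := by
  split_ifs with h
  · refine le_antisymm ?_ ?_
    · rw [Finset.fold_max_le]
      refine ⟨zero_le_one, fun x hx => ?_⟩
      rw [hg x hx]; split <;> norm_num
    · rw [Finset.le_fold_max]
      exact Or.inr ⟨c, h, by rw [hg c h]; simp⟩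
  · refine le_antisymm ?_ ?_
    · rw [Finset.fold_max_le]
      refine ⟨le_refl _, fun x hx => ?_⟩
      rw [hg x hx]
      split_ifs with he
      · exact absurd (he ▸ hx) h
      · exact le_refl _
    · rw [Finset.le_fold_max]; exact Or.inl le_rfl

lemma HT_pair (u v : ℕ) (huv : u ≠ v) (E : Finset (Finset ℕ)) (h2 : ∀ e ∈ E, e.card = 2) :
    HT {u} {v} E (fpen {u} {v}) = if ({u,v} : Finset ℕ) ∈ E then 1 else 0 := by
  have key : ∀ e ∈ E, (if u ∈ e ∧ v ∈ e then fpen {u} {v} e else 0)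
      = if e = {u,v} then 1 else 0 := by
    intro e he
    split_ifs with h h' h'
    · rw [h', fpen_pair u v huv]
    · exfalso; apply h'
      refine (Finset.eq_of_subset_of_card_le ?_ ?_).symm
      · exact Finset.insert_subset h.1 (Finset.singleton_subset_iff.mpr h.2)
      · rw [h2 e he, Finset.card_pair huv]
    · exact absurd ⟨h' ▸ Finset.mem_insert_self u {v},
        h' ▸ Finset.mem_insert_of_mem (Finset.mem_singleton_self v)⟩ h
    · rfl
  simp only [HT, Finset.sum_singleton, Finset.card_singleton, Nat.cast_one, one_mul, div_one]
  exact fold_max_indicator _ _ _ key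

lemma inter_card_one (a b : Finset ℕ) (ha : a.card = 2) (hb : b.card = 2) (hab : a ≠ b)
    (hi : (a ∩ b).Nonempty) : (a ∩ b).card = 1 := by
  have h1 : 1 ≤ (a ∩ b).card := Finset.card_pos.mpr hi
  have h2 : (a ∩ b).card ≤ 2 := ha ▸ Finset.card_le_card Finset.inter_subset_left
  have h3 : (a ∩ b).card ≠ 2 := by
    intro h
    have heq : a ∩ b = a :=
      Finset.eq_of_subset_of_card_le Finset.inter_subset_left (by rw [ha, h])
    have hsub : a ⊆ b := heq ▸ Finset.inter_subset_right
    exact hab (Finset.eq_of_subset_of_card_le hsub (by rw [ha, hb]))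
  omega

lemma Tw_pair (E : Finset (Finset ℕ)) (h2 : ∀ e ∈ E, e.card = 2) (a b : Finset ℕ)
    (ha : a ∈ E) (hb : b ∈ E) (hab : a ≠ b) (hi : (a ∩ b).Nonempty) :
    Tw E {a,b} = if (a \ b ∪ b \ a) ∈ E then 1 else 0 := by
  have hca := h2 a ha
  have hcb := h2 b hb
  have hint := inter_card_one a b hca hcb hab hi
  have hab' : (a \ b).card = 1 := by
    have := Finset.card_sdiff_add_card_inter a b; omega
  have hba' : (b \ a).card = 1 := by
    have := Finset.card_sdiff_add_card_inter b a
    rw [Finset.inter_comm] at this; omega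
  obtain ⟨u, hu⟩ := Finset.card_eq_one.mp hab'
  obtain ⟨v, hv⟩ := Finset.card_eq_one.mp hba'
  have huv : u ≠ v := by
    intro h
    have h1 : u ∈ a \ b := hu ▸ Finset.mem_singleton_self u
    have h2 : v ∈ b \ a := hv ▸ Finset.mem_singleton_self v
    rw [Finset.mem_sdiff] at h1 h2
    exact h1.2 (h ▸ h2.1)
  have hd1 : ({a,b} : Finset (Finset ℕ)) \ {a} = {b} := by
    ext x; simp; constructor
    · rintro ⟨h | h, h2⟩; exact absurd h h2; exact h
    · rintro rfl; exact ⟨Or.inr rfl, fun h => hab h.symm⟩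
  have hd2 : ({a,b} : Finset (Finset ℕ)) \ {b} = {a} := by
    ext x; simp; constructor
    · rintro ⟨h | h, h2⟩; exact h; exact absurd h h2
    · rintro rfl; exact ⟨Or.inl rfl, hab⟩
  have hcl : a \ b ∪ b \ a = ({u, v} : Finset ℕ) := by
    rw [hu, hv]; rfl
  rw [Tw, Finset.sum_pair hab, hd1, hd2, Finset.sum_singleton, Finset.sum_singleton,
    hcl, hu, hv, HT_pair u v huv E h2, HT_pair v u (Ne.symm huv) E h2,
    Finset.pair_comm v u]
  split_ifs <;> norm_num

lemma pair_union (a b : Finset ℕ) (hca : a.card = 2) (hcb : b.card = 2) (hab : a ≠ b)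
    (hi : (a ∩ b).Nonempty) :
    (a ∪ b).card = 3 ∧ (a \ b ∪ b \ a) ⊆ a ∪ b ∧ (a \ b ∪ b \ a).card = 2 ∧
    ∀ p ⊆ a ∪ b, p.card = 2 → p = a ∨ p = b ∨ p = a \ b ∪ b \ a := by
  have hint := inter_card_one a b hca hcb hab hi
  have hcu : (a ∪ b).card = 3 := by
    have := Finset.card_union_add_card_inter a b; omega
  have hab' : (a \ b).card = 1 := by
    have := Finset.card_sdiff_add_card_inter a b; omega
  have hba' : (b \ a).card = 1 := by
    have := Finset.card_sdiff_add_card_inter b a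
    rw [Finset.inter_comm] at this; omega
  obtain ⟨u, hu⟩ := Finset.card_eq_one.mp hab'
  obtain ⟨v, hv⟩ := Finset.card_eq_one.mp hba'
  obtain ⟨x, hx⟩ := Finset.card_eq_one.mp hint
  have hmu : u ∈ a \ b := hu ▸ Finset.mem_singleton_self u
  have hmv : v ∈ b \ a := hv ▸ Finset.mem_singleton_self v
  have hmx : x ∈ a ∩ b := hx ▸ Finset.mem_singleton_self x
  rw [Finset.mem_sdiff] at hmu hmv
  rw [Finset.mem_inter] at hmx
  have huv : u ≠ v := fun h => hmu.2 (h ▸ hmv.1)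
  have hux : u ≠ x := fun h => hmu.2 (h ▸ hmx.2)
  have hvx : v ≠ x := fun h => hmv.2 (h ▸ hmx.1)
  have ea : a = {u, x} := by
    rw [← Finset.sdiff_union_inter a b, hu, hx]; rfl
  have eb : b = {v, x} := by
    rw [← Finset.sdiff_union_inter b a, hv, Finset.inter_comm, hx]; rfl
  have hclosing : a \ b ∪ b \ a = ({u, v} : Finset ℕ) := by rw [hu, hv]; rfl
  have et : a ∪ b = ({u, v, x} : Finset ℕ) := by
    rw [ea, eb]; ext z; simp; tauto
  refine ⟨hcu, Finset.union_subset_union Finset.sdiff_subset Finset.sdiff_subset,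
    by rw [hclosing]; exact Finset.card_pair huv, ?_⟩
  intro p hp hpc
  have hyc : ((a ∪ b) \ p).card = 1 := by
    rw [Finset.card_sdiff_of_subset hp, hcu, hpc]
  obtain ⟨y, hy⟩ := Finset.card_eq_one.mp hyc
  have hpe : p = (a ∪ b) \ {y} := by
    rw [← hy, Finset.sdiff_sdiff_self_left, Finset.inter_eq_right.mpr hp]
  have hyt : y ∈ a ∪ b := by
    have : y ∈ (a ∪ b) \ p := hy ▸ Finset.mem_singleton_self y
    exact (Finset.mem_sdiff.mp this).1
  rw [et] at hyt
  simp only [Finset.mem_insert, Finset.mem_singleton] at hyt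
  rcases hyt with rfl | rfl | rfl
  · right; left
    rw [hpe, et, eb]; ext z; simp; omega
  · left
    rw [hpe, et, ea]; ext z; simp; omega
  · right; right
    rw [hpe, et, hclosing]; ext z; simp; omega

lemma closing_mem_iff (E : Finset (Finset ℕ)) (a b : Finset ℕ)
    (ha : a ∈ E) (hb : b ∈ E) (hca : a.card = 2) (hcb : b.card = 2) (hab : a ≠ b)
    (hi : (a ∩ b).Nonempty) :
    (a \ b ∪ b \ a) ∈ E ↔ ∀ p ∈ (a ∪ b).powersetCard 2, p ∈ E := by
  obtain ⟨_, hsub, hcard, hcases⟩ := pair_union a b hca hcb hab hi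
  constructor
  · intro hcl p hp
    rw [Finset.mem_powersetCard] at hp
    rcases hcases p hp.1 hp.2 with rfl | rfl | rfl
    · exact ha
    · exact hb
    · exact hcl
  · intro h
    exact h _ (Finset.mem_powersetCard.mpr ⟨hsub, hcard⟩)

lemma wedge_struct (E : Finset (Finset ℕ)) (w : Finset (Finset ℕ))
    (hw : w ∈ hyperwedges E) :
    ∃ a b, a ∈ E ∧ b ∈ E ∧ a ≠ b ∧ (a ∩ b).Nonempty ∧ w = {a, b} := by
  rw [hyperwedges, Finset.mem_filter, Finset.mem_powersetCard] at hw
  obtain ⟨⟨hsub, hcard⟩, hcond⟩ := hw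
  obtain ⟨a, b, hab, rfl⟩ := Finset.card_eq_two.mp hcard
  have ha : a ∈ E := hsub (Finset.mem_insert_self a {b})
  have hb : b ∈ E := hsub (Finset.mem_insert_of_mem (Finset.mem_singleton_self b))
  exact ⟨a, b, ha, hb, hab,
    (hcond a (Finset.mem_insert_self a {b})
      b (Finset.mem_insert_of_mem (Finset.mem_singleton_self b)) hab).1, rfl⟩

lemma sup_pair (a b : Finset ℕ) : ({a, b} : Finset (Finset ℕ)).sup id = a ∪ b := by
  simp [Finset.sup_insert, Finset.sup_singleton, Finset.sup_eq_union]

/-- When every hyperedge has exactly 2 nodes, the HyperTrans hypergraph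
transitivity equals the graph transitivity 3·(#triangles)/(#wedges). -/
theorem HT_reduces_to_graph_transitivity (V : Finset ℕ) (E : Finset (Finset ℕ))
    (hVE : ∀ e ∈ E, e ⊆ V) (h2 : ∀ e ∈ E, e.card = 2) :
    (∑ w ∈ hyperwedges E, Tw E w) / ((hyperwedges E).card : ℝ) =
      3 * ((V.powersetCard 3).filter
            (fun t => ∀ p ∈ t.powersetCard 2, p ∈ E)).card /
        ((hyperwedges E).card : ℝ) := by
  classical
  set Tri := (V.powersetCard 3).filter (fun t => ∀ p ∈ t.powersetCard 2, p ∈ E) with hTri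
  set S := (hyperwedges E).filter (fun w => ∀ p ∈ (w.sup id).powersetCard 2, p ∈ E)
    with hS
  -- Step 1: each wedge's Tw is the indicator of the S-condition
  have hTw : ∀ w ∈ hyperwedges E,
      Tw E w = if (∀ p ∈ (w.sup id).powersetCard 2, p ∈ E) then (1:ℝ) else 0 := by
    intro w hw
    obtain ⟨a, b, ha, hb, hab, hi, rfl⟩ := wedge_struct E w hw
    rw [Tw_pair E h2 a b ha hb hab hi, sup_pair]
    exact if_congr (closing_mem_iff E a b ha hb (h2 a ha) (h2 b hb) hab hi) rfl rfl
  -- Step 2: the sum equals the card of S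
  have hsum : ∑ w ∈ hyperwedges E, Tw E w = (S.card : ℝ) := by
    rw [Finset.sum_congr rfl hTw, Finset.sum_boole, hS]
  -- Step 3: card S = 3 * card Tri via fiberwise counting over sup
  have hmap : ∀ w ∈ S, w.sup id ∈ Tri := by
    intro w hw
    rw [hS, Finset.mem_filter] at hw
    obtain ⟨hw1, hw2⟩ := hw
    obtain ⟨a, b, ha, hb, hab, hi, rfl⟩ := wedge_struct E w hw1
    rw [sup_pair] at hw2 ⊢
    rw [hTri, Finset.mem_filter, Finset.mem_powersetCard]
    exact ⟨⟨Finset.union_subset (hVE a ha) (hVE b hb),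
      (pair_union a b (h2 a ha) (h2 b hb) hab hi).1⟩, hw2⟩
  have hfiber : ∀ t ∈ Tri,
      (S.filter (fun w => w.sup id = t)) = (t.powersetCard 2).powersetCard 2 := by
    intro t ht
    rw [hTri, Finset.mem_filter, Finset.mem_powersetCard] at ht
    obtain ⟨⟨htV, htc⟩, htE⟩ := ht
    ext w
    simp only [Finset.mem_filter, Finset.mem_powersetCard]
    constructor
    · rintro ⟨hwS, hsup⟩
      rw [hS, Finset.mem_filter] at hwS
      obtain ⟨a, b, ha, hb, hab, hi, rfl⟩ := wedge_struct E _ hwS.1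
      rw [sup_pair] at hsup
      refine ⟨?_, Finset.card_pair hab⟩
      intro p hp
      rw [Finset.mem_insert, Finset.mem_singleton] at hp
      rw [Finset.mem_powersetCard]
      rcases hp with rfl | rfl
      · exact ⟨hsup ▸ Finset.subset_union_left, h2 p ha⟩
      · exact ⟨hsup ▸ Finset.subset_union_right, h2 p hb⟩
    · rintro ⟨hwsub, hwc⟩
      obtain ⟨a, b, hab, rfl⟩ := Finset.card_eq_two.mp hwc
      have hamem := hwsub (Finset.mem_insert_self a {b})
      have hbmem := hwsub (Finset.mem_insert_of_mem (Finset.mem_singleton_self b))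
      rw [Finset.mem_powersetCard] at hamem hbmem
      have ha : a ∈ E := htE a (Finset.mem_powersetCard.mpr hamem)
      have hb : b ∈ E := htE b (Finset.mem_powersetCard.mpr hbmem)
      have hi : (a ∩ b).Nonempty := by
        rw [← Finset.card_pos]
        have h1 := Finset.card_union_add_card_inter a b
        have h2 : (a ∪ b).card ≤ 3 :=
          htc ▸ Finset.card_le_card (Finset.union_subset hamem.1 hbmem.1)
        omega
      have hsup : a ∪ b = t := by
        apply Finset.eq_of_subset_of_card_le (Finset.union_subset hamem.1 hbmem.1)
        rw [htc, (pair_union a b hamem.2 hbmem.2 hab hi).1]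
      have hwedge : ({a, b} : Finset (Finset ℕ)) ∈ hyperwedges E := by
        rw [hyperwedges, Finset.mem_filter, Finset.mem_powersetCard]
        refine ⟨⟨Finset.insert_subset ha (Finset.singleton_subset_iff.mpr hb),
          Finset.card_pair hab⟩, ?_⟩
        intro a' ha' b' hb' hne
        rw [Finset.mem_insert, Finset.mem_singleton] at ha' hb'
        have key : ∀ c d : Finset ℕ, c ∈ E → d ∈ E → c ≠ d → (c ∩ d).Nonempty →
            (c ∩ d).Nonempty ∧ ¬c ⊆ d ∧ ¬d ⊆ c := by
          intro c d hc hd hcd hne'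
          refine ⟨hne', fun hsub => hcd ?_, fun hsub => hcd.symm ?_⟩
          · exact Finset.eq_of_subset_of_card_le hsub (by rw [h2 c hc, h2 d hd])
          · exact Finset.eq_of_subset_of_card_le hsub (by rw [h2 c hc, h2 d hd])
        rcases ha' with rfl | rfl <;> rcases hb' with rfl | rfl
        · exact absurd rfl hne
        · exact key _ _ ha hb hne hi
        · exact key _ _ hb ha hne (by rwa [Finset.inter_comm] at hi)
        · exact absurd rfl hne
      refine ⟨?_, by rw [sup_pair]; exact hsup⟩
      rw [hS, Finset.mem_filter]
      exact ⟨hwedge, by rw [sup_pair, hsup]; exact htE⟩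
  have hcardS : S.card = 3 * Tri.card := by
    rw [Finset.card_eq_sum_card_fiberwise hmap]
    have : ∀ t ∈ Tri, (S.filter (fun w => w.sup id = t)).card = 3 := by
      intro t ht
      rw [hfiber t ht, Finset.card_powersetCard, Finset.card_powersetCard]
      rw [hTri, Finset.mem_filter, Finset.mem_powersetCard] at ht
      rw [ht.1.2]; decide
    rw [Finset.sum_congr rfl this, Finset.sum_const, smul_eq_mul, mul_comm]
  rw [hsum, hcardS]
  push_cast
  ring
end

section
/- For a hyperwedge w in a pairwise graph (all hyperedges of size 2), the hyperwedge transitivity T(w, E; f) with f as in the penalized definition equals 1 if the edge {u, v} joining the two non-shared endpoints u ∈ L(w), v ∈ R(w) belongs to E, and 0 otherwise. -/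
/-- In a pairwise graph, the hyperwedge transitivity of the wedge on
e_i = {x,u}, e_j = {x,v} equals 1 if {u,v} ∈ E and 0 otherwise. -/
theorem HT_pairwise_graph (E : Finset (Finset ℕ)) (h2 : ∀ e ∈ E, e.card = 2)
    (x u v : ℕ) (hux : u ≠ x) (hvx : v ≠ x) (huv : u ≠ v)
    (ei ej : Finset ℕ) (hei : ei = {x, u}) (hej : ej = {x, v})
    (hEi : ei ∈ E) (hEj : ej ∈ E) :
    HT (ei \ ej) (ej \ ei) E (fpen (ei \ ej) (ej \ ei)) =
      if ({u, v} : Finset ℕ) ∈ E then 1 else 0 := by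
  have hL : ei \ ej = {u} := by
    subst hei hej
    ext a
    simp only [Finset.mem_sdiff, Finset.mem_insert, Finset.mem_singleton]
    constructor
    · rintro ⟨h1 | h1, h2⟩
      · exact absurd (Or.inl h1) h2
      · exact h1
    · rintro rfl
      exact ⟨Or.inr rfl, by push_neg; exact ⟨hux, huv⟩⟩
  have hR : ej \ ei = {v} := by
    subst hei hej
    ext a
    simp only [Finset.mem_sdiff, Finset.mem_insert, Finset.mem_singleton]
    constructor
    · rintro ⟨h1 | h1, h2⟩
      · exact absurd (Or.inl h1) h2
      · exact h1
    · rintro rfl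
      exact ⟨Or.inr rfl, by push_neg; exact ⟨hvx, huv.symm⟩⟩
  rw [hL, hR]
  set g : Finset ℕ → ℝ := fun e => if u ∈ e ∧ v ∈ e then fpen {u} {v} e else 0 with hg
  have hgval : ∀ e ∈ E, g e = if e = ({u, v} : Finset ℕ) then 1 else 0 := by
    intro e he
    by_cases h : u ∈ e ∧ v ∈ e
    · have hsub : ({u, v} : Finset ℕ) ⊆ e := by
        intro a ha
        simp only [Finset.mem_insert, Finset.mem_singleton] at ha
        rcases ha with rfl | rfl
        · exact h.1
        · exact h.2
      have hcard : ({u, v} : Finset ℕ).card = 2 := by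
        rw [Finset.card_insert_of_notMem (by simpa using huv), Finset.card_singleton]
      have he2 : e = ({u, v} : Finset ℕ) :=
        (Finset.eq_of_subset_of_card_le hsub (by rw [hcard, h2 e he])).symm
      subst he2
      have h1 : ({u} : Finset ℕ) ∩ {u, v} = {u} := by
        ext a; simp only [Finset.mem_inter, Finset.mem_insert, Finset.mem_singleton]; tauto
      have h2' : ({v} : Finset ℕ) ∩ {u, v} = {v} := by
        ext a; simp only [Finset.mem_inter, Finset.mem_insert, Finset.mem_singleton]; tauto
      have h3 : ({u} : Finset ℕ) ∪ (({u, v} : Finset ℕ) \ {v}) = {u} := by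
        ext a
        simp only [Finset.mem_union, Finset.mem_sdiff, Finset.mem_insert, Finset.mem_singleton]
        constructor
        · rintro (rfl | ⟨rfl | rfl, hne⟩) <;> tauto
        · rintro rfl; tauto
      have h4 : ({v} : Finset ℕ) ∪ (({u, v} : Finset ℕ) \ {u}) = {v} := by
        ext a
        simp only [Finset.mem_union, Finset.mem_sdiff, Finset.mem_insert, Finset.mem_singleton]
        constructor
        · rintro (rfl | ⟨rfl | rfl, hne⟩) <;> tauto
        · rintro rfl; tauto
      simp only [hg, fpen, h, if_pos, h1, h2', h3, h4, Finset.card_singleton, if_pos rfl]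
      norm_num
    · have hne : e ≠ ({u, v} : Finset ℕ) := by
        rintro rfl
        exact h ⟨by simp, by simp⟩
      simp only [hg, if_neg h, if_neg hne]
  have hmax_eq : hmax E g = if ({u, v} : Finset ℕ) ∈ E then 1 else 0 := by
    unfold hmax
    by_cases hmem : ({u, v} : Finset ℕ) ∈ E
    · rw [if_pos hmem]
      apply le_antisymm
      · rw [Finset.fold_max_le]
        refine ⟨zero_le_one, fun e he => ?_⟩
        rw [hgval e he]
        split <;> norm_num
      · rw [Finset.le_fold_max]
        exact Or.inr ⟨{u, v}, hmem, by rw [hgval _ hmem, if_pos rfl]⟩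
    · rw [if_neg hmem]
      apply le_antisymm
      · rw [Finset.fold_max_le]
        refine ⟨le_refl 0, fun e he => ?_⟩
        rw [hgval e he, if_neg (by rintro rfl; exact hmem he)]
      · rw [Finset.le_fold_max]
        exact Or.inl (le_refl 0)
  unfold HT
  rw [Finset.sum_singleton, Finset.sum_singleton]
  simp only [Finset.mem_singleton, Finset.card_singleton, Nat.cast_one, mul_one, one_mul, div_one]
  exact hmax_eq
end
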